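/- Let R = {±e_i : 1 ≤ i ≤ 4} ∪ {±e_i ± e_j : 1 ≤ i < j ≤ 4} ∪ {(±e₁ ± e₂ ± e₃ ± e₄)/2} ⊂ ℝ⁴ be the root system of type F₄. Then Γ = {e₁ − e₂, e₁ + e₂, e₃ − e₄, e₃ + e₄} is a strongly orthogonal subset of R with 4 elements, and every strongly orthogonal subset of R has at most 4 elements. -/

import Mathlib

/-- A subset `S` of a set `R` of vectors is *strongly orthogonal* (relative to
`R`) if `S ⊆ R` and for all distinct `α, β ∈ S` one has `α ≠ -β`,
`α + β ∉ R` and `α - β ∉ R`. -/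
def IsStronglyOrthSubset {V : Type*} [AddCommGroup V] (R S : Set V) : Prop :=
  S ⊆ R ∧ S.Pairwise fun α β => α ≠ -β ∧ α + β ∉ R ∧ α - β ∉ R

/-- The `i`-th standard basis vector of `ℝⁿ`, in 1-based indexing. -/
noncomputable def stdVec (n : ℕ) (i : ℕ) : EuclideanSpace ℝ (Fin n) :=
  (WithLp.equiv 2 (Fin n → ℝ)).symm fun j => if (j : ℕ) + 1 = i then 1 else 0

/-- The root system of type `F₄` in `ℝ⁴`: the vectors `±e_i`, the vectors
`±e_i ± e_j` for `i < j`, and the 16 vectors `(±e₁ ± e₂ ± e₃ ± e₄)/2`. -/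
noncomputable def rootsF4 : Set (EuclideanSpace ℝ (Fin 4)) :=
  {x | ∃ i : ℕ, 1 ≤ i ∧ i ≤ 4 ∧ (x = stdVec 4 i ∨ x = -stdVec 4 i)} ∪
  {x | ∃ i j : ℕ, 1 ≤ i ∧ i < j ∧ j ≤ 4 ∧
      (x = stdVec 4 i + stdVec 4 j ∨ x = stdVec 4 i - stdVec 4 j ∨
       x = -stdVec 4 i + stdVec 4 j ∨ x = -stdVec 4 i - stdVec 4 j)} ∪
  {x | ∀ i : Fin 4, x i = 1 / 2 ∨ x i = -(1 / 2)}

/-! ### Auxiliary integral model -/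

abbrev Vz : Type := Fin 4 → ℤ
abbrev Q4 : Type := ℤ × ℤ × ℤ × ℤ

def ee (i : ℕ) : Vz := fun k => if (k : ℕ) + 1 = i then 2 else 0

def to4 (v : Vz) : Q4 := (v 0, v 1, v 2, v 3)

def from4 (a : Q4) : Vz := ![a.1, a.2.1, a.2.2.1, a.2.2.2]

def dotq (a b : Q4) : ℤ :=
  a.1 * b.1 + a.2.1 * b.2.1 + a.2.2.1 * b.2.2.1 + a.2.2.2 * b.2.2.2

/-- Twice the roots of `F₄`, as integer quadruples. -/
def Lq : List Q4 := [
  (2, 0, 0, 0),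
  (-2, 0, 0, 0),
  (0, 2, 0, 0),
  (0, -2, 0, 0),
  (0, 0, 2, 0),
  (0, 0, -2, 0),
  (0, 0, 0, 2),
  (0, 0, 0, -2),
  (2, 2, 0, 0),
  (2, -2, 0, 0),
  (-2, 2, 0, 0),
  (-2, -2, 0, 0),
  (2, 0, 2, 0),
  (2, 0, -2, 0),
  (-2, 0, 2, 0),
  (-2, 0, -2, 0),
  (2, 0, 0, 2),
  (2, 0, 0, -2),
  (-2, 0, 0, 2),
  (-2, 0, 0, -2),
  (0, 2, 2, 0),
  (0, 2, -2, 0),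
  (0, -2, 2, 0),
  (0, -2, -2, 0),
  (0, 2, 0, 2),
  (0, 2, 0, -2),
  (0, -2, 0, 2),
  (0, -2, 0, -2),
  (0, 0, 2, 2),
  (0, 0, 2, -2),
  (0, 0, -2, 2),
  (0, 0, -2, -2),
  (1, 1, 1, 1),
  (1, 1, 1, -1),
  (1, 1, -1, 1),
  (1, 1, -1, -1),
  (1, -1, 1, 1),
  (1, -1, 1, -1),
  (1, -1, -1, 1),
  (1, -1, -1, -1),
  (-1, 1, 1, 1),
  (-1, 1, 1, -1),
  (-1, 1, -1, 1),
  (-1, 1, -1, -1),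
  (-1, -1, 1, 1),
  (-1, -1, 1, -1),
  (-1, -1, -1, 1),
  (-1, -1, -1, -1)
]

lemma from4_to4 (v : Vz) : from4 (to4 v) = v := by
  funext k; fin_cases k <;> rfl

lemma to4_inj : Function.Injective to4 := by
  intro v w h
  rw [← from4_to4 v, ← from4_to4 w, h]

lemma to4_add (v w : Vz) : to4 (v + w) = to4 v + to4 w := rfl
lemma to4_neg (v : Vz) : to4 (-v) = -to4 v := rfl
lemma to4_sub (v w : Vz) : to4 (v - w) = to4 v - to4 w := rfl

/-- The real embedding: an integer quadruple, halved. -/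
noncomputable def phi (v : Vz) : EuclideanSpace ℝ (Fin 4) :=
  (WithLp.equiv 2 (Fin 4 → ℝ)).symm fun k => (v k : ℝ) / 2

lemma phi_apply (v : Vz) (k : Fin 4) : phi v k = (v k : ℝ) / 2 := rfl

lemma stdVec_apply (i : ℕ) (k : Fin 4) :
    stdVec 4 i k = if (k : ℕ) + 1 = i then 1 else 0 := rfl

lemma phi_add (v w : Vz) : phi (v + w) = phi v + phi w := by
  ext k
  simp only [phi_apply, PiLp.add_apply, Pi.add_apply]
  push_cast; ring

lemma phi_neg (v : Vz) : phi (-v) = -phi v := by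
  ext k
  simp only [phi_apply, PiLp.neg_apply, Pi.neg_apply]
  push_cast; ring

lemma phi_sub (v w : Vz) : phi (v - w) = phi v - phi w := by
  ext k
  simp only [phi_apply, PiLp.sub_apply, Pi.sub_apply]
  push_cast; ring

lemma phi_zero : phi 0 = 0 := by
  ext k
  simp [phi_apply]

lemma phi_inj : Function.Injective phi := by
  intro v w h
  funext k
  have h2 : phi v k = phi w k := by rw [h]
  rw [phi_apply, phi_apply] at h2
  have : (v k : ℝ) = (w k : ℝ) := by linarith
  exact_mod_cast this

lemma phi_inner (v w : Vz) :
    (inner ℝ (phi v) (phi w) : ℝ) = (dotq (to4 v) (to4 w) : ℝ) / 4 := by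
  simp only [PiLp.inner_apply, RCLike.inner_apply, starRingEnd_apply, star_trivial,
    phi_apply, Fin.sum_univ_four, dotq, to4]
  push_cast; ring

lemma stdVec_eq (i : ℕ) : stdVec 4 i = phi (ee i) := by
  ext k
  rw [stdVec_apply, phi_apply, ee]
  split <;> norm_num

def eeQ (i : Fin 4) : Q4 := to4 (ee ((i : ℕ) + 1))

/-! ### Decidable facts about `Lq` -/

set_option maxHeartbeats 2000000 in
lemma keyQ : ∀ a ∈ Lq, ∀ b ∈ Lq,
    dotq a b = 0 ∨ a = b ∨ a = -b ∨ a + b ∈ Lq ∨ a - b ∈ Lq := by decide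

lemma shapeQ : ∀ a ∈ Lq,
    (∃ i : Fin 4, a = eeQ i ∨ a = -eeQ i) ∨
    (∃ i j : Fin 4, (i : ℕ) < (j : ℕ) ∧
      (a = eeQ i + eeQ j ∨ a = eeQ i - eeQ j ∨
       a = -eeQ i + eeQ j ∨ a = -eeQ i - eeQ j)) ∨
    ((a.1 = 1 ∨ a.1 = -1) ∧ (a.2.1 = 1 ∨ a.2.1 = -1) ∧
     (a.2.2.1 = 1 ∨ a.2.2.1 = -1) ∧ (a.2.2.2 = 1 ∨ a.2.2.2 = -1)) := by decide

def q1 : Q4 := (2, -2, 0, 0)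
def q2 : Q4 := (2, 2, 0, 0)
def q3 : Q4 := (0, 0, 2, -2)
def q4 : Q4 := (0, 0, 2, 2)

lemma GfactsQ : ∀ a ∈ [q1, q2, q3, q4], a ∈ Lq ∧ ∀ b ∈ [q1, q2, q3, q4],
    a = b ∨ (a ≠ -b ∧ a + b ∉ Lq ∧ a - b ∉ Lq) := by decide

lemma zero_not_mem : to4 (0 : Vz) ∉ Lq := by decide

/-! ### The two inclusions -/

/-- The set of integer vectors whose double is a root of `F₄`. -/
def Rz : Set Vz := {v | to4 v ∈ Lq}

lemma roots_sub : rootsF4 ⊆ phi '' Rz := by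
  intro x hx
  rcases hx with (⟨i, h1, h4, hx⟩ | ⟨i, j, h1, hij, h4, hx⟩) | hx
  · rcases hx with rfl | rfl
    · refine ⟨ee i, ?_, (stdVec_eq i).symm⟩
      show to4 (ee i) ∈ Lq
      interval_cases i <;> decide
    · refine ⟨-(ee i), ?_, by rw [phi_neg, stdVec_eq i]⟩
      show to4 (-(ee i)) ∈ Lq
      interval_cases i <;> decide
  · have hi4 : i ≤ 4 := by omega
    rcases hx with rfl | rfl | rfl | rfl
    · refine ⟨ee i + ee j, ?_, by rw [phi_add, stdVec_eq i, stdVec_eq j]⟩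
      show to4 (ee i + ee j) ∈ Lq
      interval_cases i <;> interval_cases j <;> decide
    · refine ⟨ee i - ee j, ?_, by rw [phi_sub, stdVec_eq i, stdVec_eq j]⟩
      show to4 (ee i - ee j) ∈ Lq
      interval_cases i <;> interval_cases j <;> decide
    · refine ⟨-(ee i) + ee j, ?_, by rw [phi_add, phi_neg, stdVec_eq i, stdVec_eq j]⟩
      show to4 (-(ee i) + ee j) ∈ Lq
      interval_cases i <;> interval_cases j <;> decide
    · refine ⟨-(ee i) - ee j, ?_, by rw [phi_sub, phi_neg, stdVec_eq i, stdVec_eq j]⟩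
      show to4 (-(ee i) - ee j) ∈ Lq
      interval_cases i <;> interval_cases j <;> decide
  · classical
    set v : Vz := fun k => if x k = 1 / 2 then 1 else -1 with hv
    have hvk : ∀ k, (x k = 1 / 2 ∧ v k = 1) ∨ (x k = -(1 / 2) ∧ v k = -1) := by
      intro k
      rcases hx k with h | h
      · refine Or.inl ⟨h, ?_⟩
        show (if x k = 1 / 2 then (1 : ℤ) else -1) = 1
        exact if_pos h
      · refine Or.inr ⟨h, ?_⟩
        have hne : x k ≠ 1 / 2 := by rw [h]; norm_num
        show (if x k = 1 / 2 then (1 : ℤ) else -1) = -1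
        exact if_neg hne
    refine ⟨v, ?_, ?_⟩
    · show to4 v ∈ Lq
      have e0 := hvk 0; have e1 := hvk 1; have e2 := hvk 2; have e3 := hvk 3
      have ht : to4 v = (v 0, v 1, v 2, v 3) := rfl
      rcases e0 with ⟨_, h0⟩ | ⟨_, h0⟩ <;> rcases e1 with ⟨_, h1⟩ | ⟨_, h1⟩ <;>
        rcases e2 with ⟨_, h2⟩ | ⟨_, h2⟩ <;> rcases e3 with ⟨_, h3⟩ | ⟨_, h3⟩ <;>
        rw [ht, h0, h1, h2, h3] <;> decide
    · ext k
      rw [phi_apply]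
      rcases hvk k with ⟨hx', hv'⟩ | ⟨hx', hv'⟩ <;> rw [hx', hv'] <;> norm_num

lemma roots_sup : ∀ v ∈ Rz, phi v ∈ rootsF4 := by
  intro v hv
  have keyv : ∀ a : Q4, to4 v = a → v = from4 a := by
    intro a h; rw [← h, from4_to4]
  rcases shapeQ (to4 v) hv with ⟨i, h | h⟩ | ⟨i, j, hij, h | h | h | h⟩ | h
  · have : v = ee ((i : ℕ) + 1) := by
      rw [← from4_to4 v, h, eeQ, from4_to4]
    refine Or.inl (Or.inl ⟨(i : ℕ) + 1, by omega, by omega, Or.inl ?_⟩)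
    rw [this, stdVec_eq]
  · have : v = -(ee ((i : ℕ) + 1)) := by
      rw [← from4_to4 v, h, eeQ, ← to4_neg, from4_to4]
    refine Or.inl (Or.inl ⟨(i : ℕ) + 1, by omega, by omega, Or.inr ?_⟩)
    rw [this, phi_neg, stdVec_eq]
  · have : v = ee ((i : ℕ) + 1) + ee ((j : ℕ) + 1) := by
      rw [← from4_to4 v, h, eeQ, eeQ, ← to4_add, from4_to4]
    refine Or.inl (Or.inr ⟨(i : ℕ) + 1, (j : ℕ) + 1, by omega, by omega, by omega, Or.inl ?_⟩)
    rw [this, phi_add, stdVec_eq, stdVec_eq]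
  · have : v = ee ((i : ℕ) + 1) - ee ((j : ℕ) + 1) := by
      rw [← from4_to4 v, h, eeQ, eeQ, ← to4_sub, from4_to4]
    refine Or.inl (Or.inr ⟨(i : ℕ) + 1, (j : ℕ) + 1, by omega, by omega, by omega,
      Or.inr (Or.inl ?_)⟩)
    rw [this, phi_sub, stdVec_eq, stdVec_eq]
  · have : v = -(ee ((i : ℕ) + 1)) + ee ((j : ℕ) + 1) := by
      rw [← from4_to4 v, h, eeQ, eeQ, ← to4_neg, ← to4_add, from4_to4]
    refine Or.inl (Or.inr ⟨(i : ℕ) + 1, (j : ℕ) + 1, by omega, by omega, by omega,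
      Or.inr (Or.inr (Or.inl ?_))⟩)
    rw [this, phi_add, phi_neg, stdVec_eq, stdVec_eq]
  · have : v = -(ee ((i : ℕ) + 1)) - ee ((j : ℕ) + 1) := by
      rw [← from4_to4 v, h, eeQ, eeQ, ← to4_neg, ← to4_sub, from4_to4]
    refine Or.inl (Or.inr ⟨(i : ℕ) + 1, (j : ℕ) + 1, by omega, by omega, by omega,
      Or.inr (Or.inr (Or.inr ?_))⟩)
    rw [this, phi_sub, phi_neg, stdVec_eq, stdVec_eq]
  · refine Or.inr ?_
    intro k
    fin_cases k
    · rcases h.1 with h' | h' <;> [left; right] <;>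
        [(show ((v 0 : ℝ)) / 2 = 1 / 2); (show ((v 0 : ℝ)) / 2 = -(1 / 2))] <;>
        rw [show v 0 = (to4 v).1 from rfl, h'] <;> norm_num
    · rcases h.2.1 with h' | h' <;> [left; right] <;>
        [(show ((v 1 : ℝ)) / 2 = 1 / 2); (show ((v 1 : ℝ)) / 2 = -(1 / 2))] <;>
        rw [show v 1 = (to4 v).2.1 from rfl, h'] <;> norm_num
    · rcases h.2.2.1 with h' | h' <;> [left; right] <;>
        [(show ((v 2 : ℝ)) / 2 = 1 / 2); (show ((v 2 : ℝ)) / 2 = -(1 / 2))] <;>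
        rw [show v 2 = (to4 v).2.2.1 from rfl, h'] <;> norm_num
    · rcases h.2.2.2 with h' | h' <;> [left; right] <;>
        [(show ((v 3 : ℝ)) / 2 = 1 / 2); (show ((v 3 : ℝ)) / 2 = -(1 / 2))] <;>
        rw [show v 3 = (to4 v).2.2.2 from rfl, h'] <;> norm_num

/-- A root that is a root (i.e. whose double is in `Lq`) cannot satisfy
`phi (v+w) ∈ rootsF4` unless `to4 (v+w) ∈ Lq`. -/
lemma mem_Lq_of_phi_mem {u : Vz} (h : phi u ∈ rootsF4) : to4 u ∈ Lq := by
  obtain ⟨u', hu', he⟩ := roots_sub h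
  have : u' = u := phi_inj he
  rw [← this]; exact hu'

/-- `Γ = {e₁ − e₂, e₁ + e₂, e₃ − e₄, e₃ + e₄}` is a strongly
orthogonal subset of the root system of type `F₄` with `4` elements, and every
strongly orthogonal subset has at most `4` elements. -/
theorem typeF4_max_strongly_orthogonal
    (Γ : Set (EuclideanSpace ℝ (Fin 4)))
    (hΓ : Γ = {stdVec 4 1 - stdVec 4 2, stdVec 4 1 + stdVec 4 2,
               stdVec 4 3 - stdVec 4 4, stdVec 4 3 + stdVec 4 4}) :
    IsStronglyOrthSubset rootsF4 Γ ∧ Γ.ncard = 4 ∧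
      ∀ S : Set (EuclideanSpace ℝ (Fin 4)),
        IsStronglyOrthSubset rootsF4 S → S.ncard ≤ 4 := by
  classical
  set w1 : Vz := ee 1 - ee 2 with hw1
  set w2 : Vz := ee 1 + ee 2 with hw2
  set w3 : Vz := ee 3 - ee 4 with hw3
  set w4 : Vz := ee 3 + ee 4 with hw4
  have hq1 : to4 w1 = q1 := by decide
  have hq2 : to4 w2 = q2 := by decide
  have hq3 : to4 w3 = q3 := by decide
  have hq4 : to4 w4 = q4 := by decide
  have hΓ' : Γ = phi '' {w1, w2, w3, w4} := by
    rw [hΓ, stdVec_eq 1, stdVec_eq 2, stdVec_eq 3, stdVec_eq 4,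
      ← phi_sub, ← phi_add, ← phi_sub, ← phi_add]
    simp [Set.image_insert_eq]
    rfl
  have memQ : ∀ w ∈ ({w1, w2, w3, w4} : Set Vz), to4 w ∈ [q1, q2, q3, q4] := by
    intro w hw
    rcases hw with rfl | rfl | rfl | rfl <;>
      simp [hq1, hq2, hq3, hq4]
  refine ⟨⟨?_, ?_⟩, ?_, ?_⟩
  · -- Γ ⊆ rootsF4
    rw [hΓ']
    rintro x ⟨w, hw, rfl⟩
    exact roots_sup w ((GfactsQ _ (memQ w hw)).1)
  · -- pairwise strong orthogonality
    rw [hΓ']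
    rintro α ⟨v, hv, rfl⟩ β ⟨w, hw, rfl⟩ hne
    rcases (GfactsQ _ (memQ v hv)).2 _ (memQ w hw) with heq | ⟨hneg, haddm, hsubm⟩
    · exact absurd (congrArg phi (to4_inj heq)) hne
    · refine ⟨?_, ?_, ?_⟩
      · intro h
        rw [← phi_neg] at h
        exact hneg (congrArg to4 (phi_inj h))
      · intro h
        rw [← phi_add] at h
        exact haddm (to4_add v w ▸ mem_Lq_of_phi_mem h)
      · intro h
        rw [← phi_sub] at h
        exact hsubm (to4_sub v w ▸ mem_Lq_of_phi_mem h)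
  · -- ncard Γ = 4
    rw [hΓ', Set.ncard_image_of_injective _ phi_inj]
    have : ({w1, w2, w3, w4} : Set Vz) = (↑({w1, w2, w3, w4} : Finset Vz) : Set Vz) := by
      simp
    rw [this, Set.ncard_coe_finset]
    decide
  · -- the bound
    intro S ⟨hsub, hpair⟩
    have hSsub : S ⊆ phi '' Rz := fun x hx => roots_sub (hsub hx)
    have hRz : Rz ⊆ from4 '' {a | a ∈ Lq} := by
      intro v hv
      exact ⟨to4 v, hv, from4_to4 v⟩
    have hfin : S.Finite := by
      refine Set.Finite.subset ((Lq.finite_toSet.image from4).image phi) ?_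
      intro x hx
      obtain ⟨v, hv, rfl⟩ := hSsub hx
      exact ⟨from4 (to4 v), ⟨to4 v, hv, rfl⟩, by rw [from4_to4]⟩
    haveI : Fintype S := hfin.fintype
    have li : LinearIndependent ℝ (fun x : S => (x : EuclideanSpace ℝ (Fin 4))) := by
      apply linearIndependent_of_ne_zero_of_inner_eq_zero (𝕜 := ℝ)
      · intro x h0
        obtain ⟨v, hv, he⟩ := hSsub x.2
        rw [h0, ← phi_zero] at he
        exact zero_not_mem (phi_inj he ▸ hv)
      · intro x y hne
        have hvalne : (x : EuclideanSpace ℝ (Fin 4)) ≠ (y : EuclideanSpace ℝ (Fin 4)) :=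
          fun h => hne (Subtype.ext h)
        obtain ⟨hneq, haddR, hsubR⟩ := hpair x.2 y.2 hvalne
        obtain ⟨v, hv, hx⟩ := hSsub x.2
        obtain ⟨w, hw, hy⟩ := hSsub y.2
        rcases keyQ (to4 v) hv (to4 w) hw with hdot | heq | hneg | haddm | hsubm
        · rw [← hx, ← hy, phi_inner, hdot]
          norm_num
        · exact absurd (hx ▸ hy ▸ congrArg phi (to4_inj heq)) hvalne
        · have : v = -w := by
            apply to4_inj; rw [hneg, to4_neg]
          rw [this, phi_neg, hy] at hx
          exact absurd hx.symm hneq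
        · rw [← to4_add] at haddm
          have : phi (v + w) ∈ rootsF4 := roots_sup _ haddm
          rw [phi_add, hx, hy] at this
          exact absurd this haddR
        · rw [← to4_sub] at hsubm
          have : phi (v - w) ∈ rootsF4 := roots_sup _ hsubm
          rw [phi_sub, hx, hy] at this
          exact absurd this hsubR
    have hcard : Fintype.card S ≤ 4 := by
      have := li.fintype_card_le_finrank
      rwa [finrank_euclideanSpace_fin] at this
    rw [Set.ncard_eq_toFinset_card' S, Set.toFinset_card]
    exact hcard
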